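/- For all real numbers a, b, c, p > 0, one has ∫_0^∞ exp(−a z^p / (b + c z^{p/2})) dz ≤ C_p · max((b/a)^{1/p}, (c/a)^{2/p}), where C_p = 2 ∫_0^∞ exp(−(1/2) · (min(√z, z))^p) dz (a finite constant depending only on p). -/

import Mathlib

open MeasureTheory

private lemma aux_exp_rpow_integrable {q : ℝ} (hq : 0 < q) :
    IntegrableOn (fun x : ℝ => Real.exp (-(1 / 2) * x ^ q)) (Set.Ioi 0) := by
  have h0 : IntegrableOn (fun y : ℝ => y ^ (1 / q - 1) * Real.exp (-(1 / 2) * y))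
      (Set.Ioi 0) := by
    have := integrableOn_rpow_mul_exp_neg_mul_rpow (p := 1) (s := 1 / q - 1) (b := 1 / 2)
      (by have := one_div_pos.2 hq; linarith) (by norm_num) (by norm_num)
    simpa [Real.rpow_one] using this
  have h1 := (integrableOn_Ioi_comp_rpow_iff
      (fun y : ℝ => y ^ (1 / q - 1) * Real.exp (-(1 / 2) * y)) hq.ne').2 h0
  have h2 : IntegrableOn (fun x : ℝ => q * Real.exp (-(1 / 2) * x ^ q)) (Set.Ioi 0) := by
    refine IntegrableOn.congr_fun h1 (fun x hx => ?_) measurableSet_Ioi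
    have hx0 : (0 : ℝ) < x := hx
    have hh : (x ^ q) ^ (1 / q - 1) = x ^ (1 - q) := by
      rw [← Real.rpow_mul hx0.le]; congr 1; field_simp
    simp only [smul_eq_mul, hh]
    rw [abs_of_pos hq]
    have hxx : x ^ (q - 1) * x ^ (1 - q) = 1 := by
      rw [← Real.rpow_add hx0]; norm_num
    calc q * x ^ (q - 1) * (x ^ (1 - q) * Real.exp (-(1 / 2) * x ^ q))
        = q * (x ^ (q - 1) * x ^ (1 - q)) * Real.exp (-(1 / 2) * x ^ q) := by ring
      _ = q * Real.exp (-(1 / 2) * x ^ q) := by rw [hxx]; ring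
  refine IntegrableOn.congr_fun (h2.const_mul q⁻¹) (fun x _ => ?_) measurableSet_Ioi
  field_simp

/-- Integral estimate: for `a, b, c, p > 0`,
`∫_0^∞ exp(-a z^p / (b + c z^(p/2))) dz ≤ C_p max((b/a)^(1/p), (c/a)^(2/p))`
where `C_p = 2 ∫_0^∞ exp(-(1/2) (min √z z)^p) dz`. -/
theorem integral_exp_ratio_le (a b c p : ℝ) (ha : 0 < a) (hb : 0 < b) (hc : 0 < c)
    (hp : 0 < p) :
    ∫ z in Set.Ioi (0 : ℝ), Real.exp (-(a * z ^ p) / (b + c * z ^ (p / 2))) ≤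
      (2 * ∫ z in Set.Ioi (0 : ℝ), Real.exp (-(1 / 2) * (min (Real.sqrt z) z) ^ p)) *
        max ((b / a) ^ (1 / p)) ((c / a) ^ (2 / p)) := by
  set M := max ((b / a) ^ (1 / p)) ((c / a) ^ (2 / p)) with hM
  have hba : (0 : ℝ) < b / a := div_pos hb ha
  have hca : (0 : ℝ) < c / a := div_pos hc ha
  have hM0 : 0 < M := lt_max_iff.2 (Or.inl (Real.rpow_pos_of_pos hba _))
  have hbM : b ≤ a * M ^ p := by
    have h1 : (b / a) ^ (1 / p) ≤ M := le_max_left _ _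
    have h2 := Real.rpow_le_rpow (Real.rpow_nonneg hba.le _) h1 hp.le
    rw [← Real.rpow_mul hba.le, one_div, inv_mul_cancel₀ hp.ne', Real.rpow_one] at h2
    rw [div_le_iff₀ ha] at h2
    linarith [mul_comm (M ^ p) a]
  have hcM : c ≤ a * M ^ (p / 2) := by
    have h1 : (c / a) ^ (2 / p) ≤ M := le_max_right _ _
    have h2 := Real.rpow_le_rpow (Real.rpow_nonneg hca.le _) h1 (by positivity : (0:ℝ) ≤ p / 2)
    rw [← Real.rpow_mul hca.le, show 2 / p * (p / 2) = 1 by field_simp, Real.rpow_one] at h2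
    rw [div_le_iff₀ ha] at h2
    linarith [mul_comm (M ^ (p / 2)) a]
  set g : ℝ → ℝ := fun u => Real.exp (-(1 / 2) * (min (Real.sqrt u) u) ^ p) with hg
  have hgmeas : Measurable g := by fun_prop
  have hgint : IntegrableOn g (Set.Ioi 0) := by
    have hsum : IntegrableOn (fun u : ℝ =>
        Real.exp (-(1 / 2) * u ^ (p / 2)) + Real.exp (-(1 / 2) * u ^ p)) (Set.Ioi 0) :=
      (aux_exp_rpow_integrable (by positivity)).add (aux_exp_rpow_integrable hp)
    refine hsum.mono' hgmeas.aestronglyMeasurable ?_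
    filter_upwards [ae_restrict_mem measurableSet_Ioi] with u hu
    have hu0 : (0 : ℝ) < u := hu
    rw [Real.norm_eq_abs, abs_of_pos (Real.exp_pos _)]
    rcases min_cases (Real.sqrt u) u with ⟨hmin, _⟩ | ⟨hmin, _⟩
    · have hsq : (Real.sqrt u) ^ p = u ^ (p / 2) := by
        rw [Real.sqrt_eq_rpow, ← Real.rpow_mul hu0.le]; ring_nf
      simp only [hg, hmin, hsq]
      linarith [Real.exp_pos (-(1 / 2) * u ^ p)]
    · simp only [hg, hmin]
      linarith [Real.exp_pos (-(1 / 2) * u ^ (p / 2))]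
  have key : ∀ u ∈ Set.Ioi (0 : ℝ),
      Real.exp (-(a * (M * u) ^ p) / (b + c * (M * u) ^ (p / 2))) ≤ g u := by
    intro u hu
    have hu0 : (0 : ℝ) < u := hu
    set m : ℝ := min (Real.sqrt u) u with hm
    have hm0 : 0 ≤ m := le_min (Real.sqrt_nonneg u) hu0.le
    set T : ℝ := (M * u) ^ (p / 2) with hT
    have hT0 : 0 < T := Real.rpow_pos_of_pos (by positivity) _
    have hD : 0 < b + c * T := by positivity
    have hTsq : (M * u) ^ p = T * T := by
      rw [hT, ← Real.rpow_add (by positivity)]; ring_nf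
    have hTmul : T = M ^ (p / 2) * u ^ (p / 2) := Real.mul_rpow hM0.le hu0.le
    have hmu : m ^ p ≤ u ^ p := Real.rpow_le_rpow hm0 (min_le_right _ _) hp.le
    have hms : m ^ p ≤ u ^ (p / 2) := by
      have h1 : m ^ p ≤ (Real.sqrt u) ^ p :=
        Real.rpow_le_rpow hm0 (min_le_left _ _) hp.le
      rwa [Real.sqrt_eq_rpow, ← Real.rpow_mul hu0.le, show 1 / 2 * p = p / 2 by ring] at h1
    show _ ≤ Real.exp (-(1 / 2) * m ^ p)
    apply Real.exp_le_exp.2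
    rw [neg_mul, neg_div, neg_le_neg_iff, le_div_iff₀ hD]
    have hMup : (M * u) ^ p = M ^ p * u ^ p := Real.mul_rpow hM0.le hu0.le
    have hmp0 : 0 ≤ m ^ p := Real.rpow_nonneg hm0 _
    have hup0 : 0 ≤ u ^ p := Real.rpow_nonneg hu0.le _
    have huh0 : 0 ≤ u ^ (p / 2) := Real.rpow_nonneg hu0.le _
    have hMh0 : 0 ≤ M ^ (p / 2) := Real.rpow_nonneg hM0.le _
    rcases le_total (c * T) b with hcase | hcase
    · rw [hMup]
      nlinarith [mul_nonneg (sub_nonneg.2 hmu) hb.le,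
        mul_nonneg (sub_nonneg.2 hbM) hup0, mul_nonneg hmp0 (sub_nonneg.2 hcase)]
    · rw [hTsq]
      have h4 : m ^ p * c ≤ a * T := by
        have := mul_le_mul hms hcM hc.le huh0
        rw [hTmul]; nlinarith
      nlinarith [mul_le_mul_of_nonneg_right h4 hT0.le,
        mul_nonneg (sub_nonneg.2 hcase) hmp0]
  have hfmeas : Measurable
      (fun u : ℝ => Real.exp (-(a * (M * u) ^ p) / (b + c * (M * u) ^ (p / 2)))) := by
    fun_prop
  have hfint : IntegrableOn
      (fun u : ℝ => Real.exp (-(a * (M * u) ^ p) / (b + c * (M * u) ^ (p / 2))))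
      (Set.Ioi 0) := by
    refine hgint.mono' hfmeas.aestronglyMeasurable ?_
    filter_upwards [ae_restrict_mem measurableSet_Ioi] with u hu
    rw [Real.norm_eq_abs, abs_of_pos (Real.exp_pos _)]
    exact key u hu
  have hsub : M * (∫ u in Set.Ioi (0 : ℝ),
      Real.exp (-(a * (M * u) ^ p) / (b + c * (M * u) ^ (p / 2))))
      = ∫ z in Set.Ioi (0 : ℝ), Real.exp (-(a * z ^ p) / (b + c * z ^ (p / 2))) := by
    rw [integral_comp_mul_left_Ioi
        (fun z => Real.exp (-(a * z ^ p) / (b + c * z ^ (p / 2)))) 0 hM0, mul_zero,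
      smul_eq_mul, ← mul_assoc, mul_inv_cancel₀ hM0.ne', one_mul]
  have hgnn : 0 ≤ ∫ z in Set.Ioi (0 : ℝ), g z :=
    setIntegral_nonneg measurableSet_Ioi fun x _ => (Real.exp_pos _).le
  calc ∫ z in Set.Ioi (0 : ℝ), Real.exp (-(a * z ^ p) / (b + c * z ^ (p / 2)))
      = M * ∫ u in Set.Ioi (0 : ℝ),
          Real.exp (-(a * (M * u) ^ p) / (b + c * (M * u) ^ (p / 2))) := hsub.symm
    _ ≤ M * ∫ z in Set.Ioi (0 : ℝ), g z :=
        mul_le_mul_of_nonneg_left (setIntegral_mono_on hfint hgint measurableSet_Ioi key) hM0.le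
    _ ≤ (2 * ∫ z in Set.Ioi (0 : ℝ), g z) * M := by nlinarith
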